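/- arXiv:1605.08674 — 2 statements merged into one kernel-verified Lean document; each statement's English description precedes it below -/
import Mathlib

section
/- Hyperbolic parameter freedom: let k be a positive integer and let α : (0,1) → (0,1) satisfy r^k ≤ α_r < 1 for all 0 < r < 1. For 0<r<1, 0<α<1 and f holomorphic, define ρ_{H,r,α}(f) = (α²/log(1/(1−r²))) ∫_{D(0,r)} ((1−|αz|²)|f(z)| − 1)² dA(z)/(1−|αz|²). Then liminf_{r→1⁻} inf_{f ∈ Pol(ℂ)} ρ_{H,r,α_r}(f) ≥ ρ_H. -/
open MeasureTheory Filter Set Metric Polynomial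
open scoped ENNReal Topology NNReal

noncomputable section

/-- Normalized area measure on `ℂ`: `dA = (1/π)·(Lebesgue measure)`. -/
def dA : Measure ℂ := (ENNReal.ofReal Real.pi)⁻¹ • volume

/-- The open annulus `𝔸(s,t) = {z : s < |z| < t}`. -/
def ann (s t : ℝ) : Set ℂ := ball (0:ℂ) t \ closedBall (0:ℂ) s

/-- The Cauchy–Riemann operator `∂̄u = (u_x + i u_y)/2` for complex-valued functions. -/
def dbar (u : ℂ → ℂ) (z : ℂ) : ℂ :=
  (fderiv ℝ u z 1 + Complex.I * fderiv ℝ u z Complex.I) / 2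

/-- The Cauchy–Riemann operator `∂̄u = (u_x + i u_y)/2` for real-valued functions. -/
def dbarR (u : ℂ → ℝ) (z : ℂ) : ℂ :=
  (((fderiv ℝ u z 1 : ℝ) : ℂ) + Complex.I * ((fderiv ℝ u z Complex.I : ℝ) : ℂ)) / 2

/-- The planar discrepancy functional `ρ_{C,γ}(f) = ∫_𝔻 (|f(z)|e^{-γ|z|²} - 1)² dA(z)`. -/
def rhoC (γ : ℝ) (f : ℂ → ℂ) : ℝ≥0∞ :=
  ∫⁻ z in ball (0:ℂ) 1,
    ENNReal.ofReal ((‖f z‖ * Real.exp (-γ * ‖z‖ ^ 2) - 1) ^ 2) ∂dA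

/-- The tight planar discrepancy functional
`ρ*_{C,γ}(f) = ∫_ℂ (|f(z)|e^{-γ|z|²} - 1_𝔻(z))² dA(z)`. -/
def rhoCStar (γ : ℝ) (f : ℂ → ℂ) : ℝ≥0∞ :=
  ∫⁻ z, ENNReal.ofReal ((‖f z‖ * Real.exp (-γ * ‖z‖ ^ 2)
      - (ball (0:ℂ) 1).indicator (fun _ => (1:ℝ)) z) ^ 2) ∂dA

/-- The planar discrepancy density `ρ_C`. -/
def rhoCd : ℝ≥0∞ :=
  liminf (fun γ : ℝ => ⨅ p : Polynomial ℂ, rhoC γ fun z => p.eval z) atTop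

/-- The tight planar discrepancy density `ρ_C*`. -/
def rhoCdStar : ℝ≥0∞ :=
  liminf (fun γ : ℝ => ⨅ p : Polynomial ℂ, rhoCStar γ fun z => p.eval z) atTop

/-- The hyperbolic discrepancy functional
`ρ_{H,r}(f) = (1/log(1/(1-r²))) ∫_{D(0,r)} ((1-|z|²)|f(z)| - 1)² dA(z)/(1-|z|²)`. -/
def rhoH (r : ℝ) (f : ℂ → ℂ) : ℝ≥0∞ :=
  (ENNReal.ofReal (Real.log (1 / (1 - r ^ 2))))⁻¹ *
    ∫⁻ z in ball (0:ℂ) r,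
      ENNReal.ofReal (((1 - ‖z‖ ^ 2) * ‖f z‖ - 1) ^ 2
        / (1 - ‖z‖ ^ 2)) ∂dA

/-- The tight hyperbolic discrepancy functional
`ρ*_{H,r}(f) = (1/log(1/(1-r²))) ∫_𝔻 ((1-|z|²)|f(z)| - 1_{D(0,r)}(z))² dA(z)/(1-|z|²)`. -/
def rhoHStar (r : ℝ) (f : ℂ → ℂ) : ℝ≥0∞ :=
  (ENNReal.ofReal (Real.log (1 / (1 - r ^ 2))))⁻¹ *
    ∫⁻ z in ball (0:ℂ) 1,
      ENNReal.ofReal (((1 - ‖z‖ ^ 2) * ‖f z‖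
        - (ball (0:ℂ) r).indicator (fun _ => (1:ℝ)) z) ^ 2
        / (1 - ‖z‖ ^ 2)) ∂dA

/-- The hyperbolic discrepancy density `ρ_H`. -/
def rhoHd : ℝ≥0∞ :=
  liminf (fun r : ℝ => ⨅ p : Polynomial ℂ, rhoH r fun z => p.eval z) (𝓝[<] (1:ℝ))

/-- The tight hyperbolic discrepancy density `ρ_H*`. -/
def rhoHdStar : ℝ≥0∞ :=
  liminf (fun r : ℝ => ⨅ p : Polynomial ℂ, rhoHStar r fun z => p.eval z) (𝓝[<] (1:ℝ))

/-- `f` is a minimizer of `ρ_{C,γ}` among holomorphic functions on `𝔻`. -/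
def IsMinC (γ : ℝ) (f : ℂ → ℂ) : Prop :=
  DifferentiableOn ℂ f (ball 0 1) ∧
    ∀ g : ℂ → ℂ, DifferentiableOn ℂ g (ball 0 1) → rhoC γ f ≤ rhoC γ g

/-- `f` is a minimizer of `ρ_{H,r}` among holomorphic functions on `𝔻`. -/
def IsMinH (r : ℝ) (f : ℂ → ℂ) : Prop :=
  DifferentiableOn ℂ f (ball 0 1) ∧
    ∀ g : ℂ → ℂ, DifferentiableOn ℂ g (ball 0 1) → rhoH r f ≤ rhoH r g

end


/-! ### Auxiliary lemmas -/

private lemma lint_smul_vol (a : ℝ) (ha : a ≠ 0) (f : ℂ → ℝ≥0∞) :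
    ∫⁻ z, f (a • z) ∂(volume : Measure ℂ)
      = ENNReal.ofReal |(a ^ 2)⁻¹| * ∫⁻ w, f w ∂(volume : Measure ℂ) := by
  have hfun : (⇑(Homeomorph.smul (α := ℂ) (isUnit_iff_ne_zero.2 ha).unit))
      = (fun x : ℂ => a • x) := by
    ext z
    simp only [Homeomorph.smul_apply, Units.smul_def, IsUnit.unit_spec]
  have h1 := MeasureTheory.lintegral_map_equiv (μ := (volume : Measure ℂ)) f
    ((Homeomorph.smul (α := ℂ) (isUnit_iff_ne_zero.2 ha).unit).toMeasurableEquiv)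
  rw [Homeomorph.toMeasurableEquiv_coe] at h1
  simp only [hfun] at h1
  rw [← h1, MeasureTheory.Measure.map_addHaar_smul (volume : Measure ℂ) ha,
    lintegral_smul_measure, Complex.finrank_real_complex, smul_eq_mul]

/-- Change of variables `w = a • z` for set lintegrals over balls w.r.t. `dA`. -/
private lemma lint_smul_ball (a : ℝ) (ha : 0 < a) (R : ℝ) (g : ℂ → ℝ≥0∞) :
    ∫⁻ w in ball (0:ℂ) (a * R), g w ∂dA
      = ENNReal.ofReal (a ^ 2) * ∫⁻ z in ball (0:ℂ) R, g (a • z) ∂dA := by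
  have ha2 : (0:ℝ) < a ^ 2 := by positivity
  have key : ∫⁻ w in ball (0:ℂ) (a * R), g w ∂(volume : Measure ℂ)
      = ENNReal.ofReal (a ^ 2) * ∫⁻ z in ball (0:ℂ) R, g (a • z) ∂(volume : Measure ℂ) := by
    have hind : ∀ z : ℂ, ((ball (0:ℂ) (a * R)).indicator g) (a • z)
        = (ball (0:ℂ) R).indicator (fun z => g (a • z)) z := by
      intro z
      have hmem : a • z ∈ ball (0:ℂ) (a * R) ↔ z ∈ ball (0:ℂ) R := by
        simp only [mem_ball_zero_iff, norm_smul, Real.norm_eq_abs, abs_of_pos ha]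
        exact mul_lt_mul_iff_right₀ ha
      by_cases hz : z ∈ ball (0:ℂ) R
      · rw [Set.indicator_of_mem (hmem.2 hz), Set.indicator_of_mem hz]
      · rw [Set.indicator_of_notMem (fun h => hz (hmem.1 h)), Set.indicator_of_notMem hz]
    have h1 := lint_smul_vol a (ne_of_gt ha) ((ball (0:ℂ) (a * R)).indicator g)
    rw [lintegral_indicator measurableSet_ball] at h1
    have h2 : ∫⁻ z, ((ball (0:ℂ) (a * R)).indicator g) (a • z) ∂(volume : Measure ℂ)
        = ∫⁻ z in ball (0:ℂ) R, g (a • z) ∂(volume : Measure ℂ) := by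
      rw [← lintegral_indicator measurableSet_ball]
      exact lintegral_congr hind
    rw [h2] at h1
    rw [h1, abs_of_pos (by positivity : (0:ℝ) < (a^2)⁻¹), ENNReal.ofReal_inv_of_pos ha2,
      ← mul_assoc, ENNReal.mul_inv_cancel (by simpa using ha.ne') ENNReal.ofReal_ne_top, one_mul]
  have hdA : ∀ (s : Set ℂ) (h : ℂ → ℝ≥0∞),
      ∫⁻ w in s, h w ∂dA = (ENNReal.ofReal Real.pi)⁻¹ * ∫⁻ w in s, h w ∂(volume : Measure ℂ) := by
    intro s h
    rw [dA, Measure.restrict_smul, lintegral_smul_measure, smul_eq_mul]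
  rw [hdA, hdA, key, ← mul_assoc, ← mul_assoc, mul_comm (ENNReal.ofReal Real.pi)⁻¹]

/-- The key change-of-variables identity relating the `α`-modified functional to `rhoH`. -/
private lemma key_identity (r a : ℝ) (hr0 : 0 < r) (ha0 : 0 < a) (hs1 : a * r < 1)
    (p : Polynomial ℂ) :
    ENNReal.ofReal (a ^ 2) * (ENNReal.ofReal (Real.log (1 / (1 - r ^ 2))))⁻¹ *
        ∫⁻ z in ball (0:ℂ) r, ENNReal.ofReal
          (((1 - a ^ 2 * ‖z‖ ^ 2) * ‖p.eval z‖ - 1) ^ 2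
            / (1 - a ^ 2 * ‖z‖ ^ 2)) ∂dA
      = ENNReal.ofReal (Real.log (1 / (1 - (a * r) ^ 2))) *
          (ENNReal.ofReal (Real.log (1 / (1 - r ^ 2))))⁻¹ *
          rhoH (a * r) (fun z => (p.comp (Polynomial.C ((a:ℂ))⁻¹ * Polynomial.X)).eval z) := by
  have hs0 : 0 < a * r := mul_pos ha0 hr0
  have hLs : 0 < Real.log (1 / (1 - (a * r) ^ 2)) := by
    apply Real.log_pos
    rw [lt_div_iff₀ (by nlinarith)]
    nlinarith
  set q : Polynomial ℂ := p.comp (Polynomial.C ((a:ℂ))⁻¹ * Polynomial.X) with hq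
  have haC : ((a:ℂ)) ≠ 0 := Complex.ofReal_ne_zero.2 (ne_of_gt ha0)
  have hpt : ∀ z : ℂ,
      ENNReal.ofReal (((1 - ‖(a:ℝ) • z‖ ^ 2) * ‖q.eval ((a:ℝ) • z)‖ - 1) ^ 2
        / (1 - ‖(a:ℝ) • z‖ ^ 2))
      = ENNReal.ofReal (((1 - a ^ 2 * ‖z‖ ^ 2) * ‖p.eval z‖ - 1) ^ 2
        / (1 - a ^ 2 * ‖z‖ ^ 2)) := by
    intro z
    have h1 : ((a:ℝ) • z) = (a:ℂ) * z := Complex.real_smul ▸ rfl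
    have h2 : ‖(a:ℝ) • z‖ ^ 2 = a ^ 2 * ‖z‖ ^ 2 := by
      rw [h1, norm_mul, Complex.norm_real, Real.norm_eq_abs, abs_of_pos ha0, mul_pow]
    have h3 : q.eval ((a:ℝ) • z) = p.eval z := by
      rw [h1, hq]
      simp only [Polynomial.eval_comp, Polynomial.eval_mul, Polynomial.eval_C, Polynomial.eval_X]
      rw [inv_mul_cancel_left₀ haC]
    rw [h2, h3]
  have hcov : ∫⁻ w in ball (0:ℂ) (a * r), ENNReal.ofReal
        (((1 - ‖w‖ ^ 2) * ‖q.eval w‖ - 1) ^ 2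
          / (1 - ‖w‖ ^ 2)) ∂dA
      = ENNReal.ofReal (a ^ 2) * ∫⁻ z in ball (0:ℂ) r, ENNReal.ofReal
          (((1 - a ^ 2 * ‖z‖ ^ 2) * ‖p.eval z‖ - 1) ^ 2
            / (1 - a ^ 2 * ‖z‖ ^ 2)) ∂dA := by
    rw [lint_smul_ball a ha0 r]
    congr 1
    exact lintegral_congr fun z => hpt z
  have hLsne : ENNReal.ofReal (Real.log (1 / (1 - (a * r) ^ 2))) ≠ 0 := by
    simpa using hLs
  have hc : ∀ X L I A : ℝ≥0∞, X ≠ 0 → X ≠ ∞ → X * L * (X⁻¹ * (A * I)) = A * L * I := by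
    intro X L I A h0 ht
    rw [show X * L * (X⁻¹ * (A * I)) = X * X⁻¹ * (L * (A * I)) by ring,
      ENNReal.mul_inv_cancel h0 ht, one_mul]
    ring
  rw [rhoH, hcov, hc _ _ _ _ hLsne ENNReal.ofReal_ne_top]

private lemma tendsto_L_atTop :
    Tendsto (fun r : ℝ => Real.log (1 / (1 - r ^ 2))) (𝓝[<] (1:ℝ)) atTop := by
  have h1 : Tendsto (fun r : ℝ => 1 - r ^ 2) (𝓝[<] (1:ℝ)) (𝓝[>] (0:ℝ)) := by
    rw [tendsto_nhdsWithin_iff]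
    constructor
    · have hc : Tendsto (fun r : ℝ => 1 - r ^ 2) (𝓝 (1:ℝ)) (𝓝 (1 - 1 ^ 2)) :=
        (continuous_const.sub (continuous_pow 2)).tendsto 1
      norm_num at hc
      exact hc.mono_left nhdsWithin_le_nhds
    · filter_upwards [Ioo_mem_nhdsLT_of_mem (show (1:ℝ) ∈ Ioc (0:ℝ) 1 by constructor <;> norm_num)]
        with r hr
      have := hr.1; have := hr.2
      exact mem_Ioi.mpr (by nlinarith)
  have h2 : Tendsto (fun x : ℝ => 1 / x) (𝓝[>] (0:ℝ)) atTop := by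
    simpa [one_div] using tendsto_inv_nhdsGT_zero
  exact Real.tendsto_log_atTop.comp (h2.comp h1)

/-- hyperbolic parameter freedom. Let `k ≥ 1` and `α : (0,1) → (0,1)`
satisfy `r^k ≤ α_r < 1`. With
`ρ_{H,r,α}(f) = (α²/log(1/(1-r²))) ∫_{D(0,r)} ((1-|αz|²)|f(z)|-1)² dA(z)/(1-|αz|²)`,
one has `liminf_{r→1⁻} inf_f ρ_{H,r,α_r}(f) ≥ ρ_H`. -/
theorem hyperbolic_parameter_freedom (k : ℕ) (hk : 0 < k) (α : ℝ → ℝ)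
    (hα : ∀ r : ℝ, 0 < r → r < 1 → r ^ k ≤ α r ∧ α r < 1)
    (hαpos : ∀ r : ℝ, 0 < r → r < 1 → 0 < α r) :
    rhoHd ≤ liminf (fun r : ℝ => ⨅ p : Polynomial ℂ,
        ENNReal.ofReal ((α r) ^ 2) * (ENNReal.ofReal (Real.log (1 / (1 - r ^ 2))))⁻¹ *
          ∫⁻ z in ball (0:ℂ) r, ENNReal.ofReal
            (((1 - (α r) ^ 2 * ‖z‖ ^ 2) * ‖p.eval z‖ - 1) ^ 2
              / (1 - (α r) ^ 2 * ‖z‖ ^ 2)) ∂dA)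
      (𝓝[<] (1:ℝ)) := by
  refine ENNReal.le_of_forall_lt_one_mul_le fun b hb => ?_
  have hbne : b ≠ ⊤ := ne_top_of_lt (hb.trans ENNReal.one_lt_top)
  set β := b.toReal with hβ
  have hβ0 : 0 ≤ β := ENNReal.toReal_nonneg
  have hβ1 : β < 1 := by
    have := (ENNReal.toReal_lt_toReal hbne ENNReal.one_ne_top).mpr hb
    simpa using this
  have hbeq : b = ENNReal.ofReal β := (ENNReal.ofReal_toReal hbne).symm
  have hE1 : ∀ᶠ r in 𝓝[<] (1:ℝ), r ∈ Ioo (0:ℝ) 1 :=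
    eventually_mem_set.mpr (Ioo_mem_nhdsLT_of_mem ⟨zero_lt_one, le_refl 1⟩)
  have hE2 : ∀ᶠ r in 𝓝[<] (1:ℝ),
      Real.log ((k:ℝ) + 1) ≤ (1 - β) * Real.log (1 / (1 - r ^ 2)) :=
    (tendsto_L_atTop.const_mul_atTop (show (0:ℝ) < 1 - β by linarith)).eventually_ge_atTop _
  have hg : Tendsto (fun r : ℝ => α r * r) (𝓝[<] (1:ℝ)) (𝓝[<] (1:ℝ)) := by
    rw [tendsto_nhdsWithin_iff]
    constructor
    · have hlow : Tendsto (fun r : ℝ => r ^ (k+1)) (𝓝[<] (1:ℝ)) (𝓝 (1:ℝ)) := by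
        have h := (continuous_pow (k+1)).tendsto (1:ℝ)
        rw [one_pow] at h
        exact h.mono_left nhdsWithin_le_nhds
      refine tendsto_of_tendsto_of_tendsto_of_le_of_le' hlow tendsto_const_nhds ?_ ?_
      · filter_upwards [hE1] with r hr
        obtain ⟨hak, _⟩ := hα r hr.1 hr.2
        calc r ^ (k+1) = r ^ k * r := pow_succ r k
          _ ≤ α r * r := mul_le_mul_of_nonneg_right hak hr.1.le
      · filter_upwards [hE1] with r hr
        obtain ⟨hak, ha1⟩ := hα r hr.1 hr.2
        have ha0 := hαpos r hr.1 hr.2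
        nlinarith [hr.1, hr.2]
    · filter_upwards [hE1] with r hr
      obtain ⟨hak, ha1⟩ := hα r hr.1 hr.2
      have ha0 := hαpos r hr.1 hr.2
      exact mem_Iio.mpr (by nlinarith [hr.1, hr.2])
  have hev : ∀ᶠ r in 𝓝[<] (1:ℝ),
      b * (⨅ p : Polynomial ℂ, rhoH (α r * r) fun z => p.eval z)
        ≤ ⨅ p : Polynomial ℂ,
            ENNReal.ofReal ((α r) ^ 2) * (ENNReal.ofReal (Real.log (1 / (1 - r ^ 2))))⁻¹ *
              ∫⁻ z in ball (0:ℂ) r, ENNReal.ofReal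
                (((1 - (α r) ^ 2 * ‖z‖ ^ 2) * ‖p.eval z‖ - 1) ^ 2
                  / (1 - (α r) ^ 2 * ‖z‖ ^ 2)) ∂dA := by
    filter_upwards [hE1, hE2] with r hr hr2
    obtain ⟨hr0, hr1⟩ := hr
    obtain ⟨hak, ha1⟩ := hα r hr0 hr1
    have ha0 := hαpos r hr0 hr1
    have hs1 : α r * r < 1 := by nlinarith
    have hL0 : 0 < Real.log (1 / (1 - r ^ 2)) := by
      apply Real.log_pos
      rw [lt_div_iff₀ (by nlinarith)]
      nlinarith
    have hsl : r ^ (k+1) ≤ α r * r := by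
      calc r ^ (k+1) = r ^ k * r := pow_succ r k
        _ ≤ α r * r := mul_le_mul_of_nonneg_right hak hr0.le
    have hbern : 1 + ((k:ℝ) + 1) * (r ^ 2 - 1) ≤ (r ^ 2) ^ (k+1) := by
      have h := one_add_mul_le_pow (show (-2:ℝ) ≤ r ^ 2 - 1 by nlinarith) (k+1)
      rw [show (1:ℝ) + (r ^ 2 - 1) = r ^ 2 by ring] at h
      push_cast at h
      linarith
    have h1s : 1 - (α r * r) ^ 2 ≤ ((k:ℝ) + 1) * (1 - r ^ 2) := by
      have hsq : (r ^ (k+1)) ^ 2 ≤ (α r * r) ^ 2 := by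
        apply pow_le_pow_left₀ (by positivity) hsl
      rw [show (r ^ (k+1)) ^ 2 = (r ^ 2) ^ (k+1) by
        rw [← pow_mul, ← pow_mul, Nat.mul_comm]] at hsq
      nlinarith
    have h2s : 0 < 1 - (α r * r) ^ 2 := by nlinarith [mul_pos ha0 hr0]
    have hLsge : β * Real.log (1 / (1 - r ^ 2)) ≤ Real.log (1 / (1 - (α r * r) ^ 2)) := by
      have hlog : Real.log (1 - (α r * r) ^ 2) ≤ Real.log (((k:ℝ) + 1) * (1 - r ^ 2)) :=
        Real.log_le_log h2s h1s
      have hmul : Real.log (((k:ℝ) + 1) * (1 - r ^ 2))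
          = Real.log ((k:ℝ) + 1) + Real.log (1 - r ^ 2) :=
        Real.log_mul (by positivity) (by nlinarith)
      have hLr : Real.log (1 / (1 - r ^ 2)) = - Real.log (1 - r ^ 2) := by
        rw [one_div, Real.log_inv]
      have hLsr : Real.log (1 / (1 - (α r * r) ^ 2)) = - Real.log (1 - (α r * r) ^ 2) := by
        rw [one_div, Real.log_inv]
      rw [hLr] at hr2 ⊢
      rw [hLsr]
      linarith [hmul ▸ hlog]
    have hble : b ≤ ENNReal.ofReal (Real.log (1 / (1 - (α r * r) ^ 2))) *
        (ENNReal.ofReal (Real.log (1 / (1 - r ^ 2))))⁻¹ := by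
      have h1 : ENNReal.ofReal β * ENNReal.ofReal (Real.log (1 / (1 - r ^ 2)))
          ≤ ENNReal.ofReal (Real.log (1 / (1 - (α r * r) ^ 2))) := by
        rw [← ENNReal.ofReal_mul hβ0]
        exact ENNReal.ofReal_le_ofReal hLsge
      have hLne : ENNReal.ofReal (Real.log (1 / (1 - r ^ 2))) ≠ 0 := by
        simpa using hL0
      calc b = ENNReal.ofReal β * (ENNReal.ofReal (Real.log (1 / (1 - r ^ 2))) *
              (ENNReal.ofReal (Real.log (1 / (1 - r ^ 2))))⁻¹) := by
            rw [ENNReal.mul_inv_cancel hLne ENNReal.ofReal_ne_top, mul_one, ← hbeq]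
        _ = ENNReal.ofReal β * ENNReal.ofReal (Real.log (1 / (1 - r ^ 2))) *
              (ENNReal.ofReal (Real.log (1 / (1 - r ^ 2))))⁻¹ := by rw [mul_assoc]
        _ ≤ _ := mul_le_mul_left h1 _
    refine le_iInf fun p => ?_
    calc b * (⨅ p' : Polynomial ℂ, rhoH (α r * r) fun z => p'.eval z)
        ≤ (ENNReal.ofReal (Real.log (1 / (1 - (α r * r) ^ 2))) *
            (ENNReal.ofReal (Real.log (1 / (1 - r ^ 2))))⁻¹) *
            (⨅ p' : Polynomial ℂ, rhoH (α r * r) fun z => p'.eval z) :=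
          mul_le_mul_left hble _
      _ ≤ (ENNReal.ofReal (Real.log (1 / (1 - (α r * r) ^ 2))) *
            (ENNReal.ofReal (Real.log (1 / (1 - r ^ 2))))⁻¹) *
            rhoH (α r * r)
              (fun z => (p.comp (Polynomial.C ((↑(α r) : ℂ))⁻¹ * Polynomial.X)).eval z) :=
          mul_le_mul_right (iInf_le _ _) _
      _ = ENNReal.ofReal ((α r) ^ 2) * (ENNReal.ofReal (Real.log (1 / (1 - r ^ 2))))⁻¹ *
            ∫⁻ z in ball (0:ℂ) r, ENNReal.ofReal
              (((1 - (α r) ^ 2 * ‖z‖ ^ 2) * ‖p.eval z‖ - 1) ^ 2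
                / (1 - (α r) ^ 2 * ‖z‖ ^ 2)) ∂dA :=
          (key_identity r (α r) hr0 ha0 hs1 p).symm
  have hmap : map (fun r : ℝ => α r * r) (𝓝[<] (1:ℝ)) ≤ 𝓝[<] (1:ℝ) := hg
  calc b * rhoHd
      = b * liminf (fun s : ℝ => ⨅ p : Polynomial ℂ, rhoH s fun z => p.eval z)
          (𝓝[<] (1:ℝ)) := rfl
    _ ≤ b * liminf (fun r : ℝ => ⨅ p : Polynomial ℂ, rhoH (α r * r) fun z => p.eval z)
          (𝓝[<] (1:ℝ)) := by
        apply mul_le_mul_right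
        rw [show (fun r : ℝ => ⨅ p : Polynomial ℂ, rhoH (α r * r) fun z => p.eval z)
            = (fun s : ℝ => ⨅ p : Polynomial ℂ, rhoH s fun z => p.eval z) ∘
                (fun r : ℝ => α r * r) from rfl, liminf_comp]
        exact liminf_le_liminf_of_le hmap
    _ ≤ liminf (fun r : ℝ =>
          b * ⨅ p : Polynomial ℂ, rhoH (α r * r) fun z => p.eval z) (𝓝[<] (1:ℝ)) := by
        have h := ENNReal.le_liminf_mul (f := 𝓝[<] (1:ℝ)) (u := fun _ : ℝ => b)
          (v := fun r : ℝ => ⨅ p : Polynomial ℂ, rhoH (α r * r) fun z => p.eval z)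
        rwa [liminf_const] at h
    _ ≤ _ := liminf_le_liminf hev
end

section
/- Hyperbolic L²-non-concentration: let (r_k) ⊂ (0,1) be a sequence tending to 1 such that inf_{f ∈ Pol(ℂ)} ρ_{H,r_k}(f) → ρ_H as k → ∞; set δ_k = 1−r_k, and for each k let f_k be a minimizer of ρ_{H,r_k}. Then (1/log(1/(1−r_k²))) ∫_{𝔸(r_k(1−δ_k), r_k)} |f_k(z)|² (1−|z|²) dA(z) → 0 as k → ∞. -/
open MeasureTheory Filter Set Metric Polynomial
open scoped ENNReal Topology NNReal

noncomputable section Helpers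

/-- Abbreviation for the normalizing constant `L(r) = log(1/(1-r²))` as `ℝ≥0∞`. -/
def LL (r : ℝ) : ℝ≥0∞ := ENNReal.ofReal (Real.log (1 / (1 - r ^ 2)))

/-- The discrepancy integral of `f` over a set `S`. -/
def Dint (f : ℂ → ℂ) (S : Set ℂ) : ℝ≥0∞ :=
  ∫⁻ z in S, ENNReal.ofReal (((1 - ‖z‖ ^ 2) * ‖f z‖ - 1) ^ 2
      / (1 - ‖z‖ ^ 2)) ∂dA

lemma rhoH_eq (r : ℝ) (f : ℂ → ℂ) : rhoH r f = (LL r)⁻¹ * Dint f (ball 0 r) := rfl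

lemma LL_ne_top (r : ℝ) : LL r ≠ ⊤ := ENNReal.ofReal_ne_top

lemma LL_pos {r : ℝ} (h0 : 0 < r) (h1 : r < 1) : 0 < LL r := by
  rw [LL, ENNReal.ofReal_pos]
  apply Real.log_pos
  rw [lt_div_iff₀ (by nlinarith)]
  nlinarith

lemma dA_ball {t : ℝ} (ht : 0 ≤ t) : dA (ball (0:ℂ) t) = ENNReal.ofReal (t ^ 2) := by
  have hπ : ENNReal.ofReal Real.pi = (NNReal.pi : ℝ≥0∞) := by
    rw [← NNReal.coe_real_pi, ENNReal.ofReal_coe_nnreal]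
  simp only [dA, Measure.smul_apply, Complex.volume_ball, smul_eq_mul, hπ]
  rw [← ENNReal.ofReal_pow ht]
  rw [mul_comm (ENNReal.ofReal (t^2)), ← mul_assoc, ENNReal.inv_mul_cancel, one_mul]
  · simp [NNReal.pi_ne_zero]
  · exact ENNReal.coe_ne_top

/-- Key real inequality for comparing discrepancy densities of uniformly close functions. -/
lemma key_real {w wl A Aq M e : ℝ} (hwl : 0 < wl) (hwlw : wl ≤ w) (hw1 : w ≤ 1)
    (he0 : 0 ≤ e) (he1 : e ≤ 1) (hM0 : 0 ≤ M)
    (hAA : |Aq - A| ≤ e) (hA1 : |A - 1| ≤ M + 1) :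
    (Aq - 1) ^ 2 / w ≤ (A - 1) ^ 2 / w + (2 * M + 3) * e / wl := by
  have hw : 0 < w := lt_of_lt_of_le hwl hwlw
  have hsq : (Aq - 1) ^ 2 ≤ (A - 1) ^ 2 + (2 * M + 3) * e := by
    nlinarith [sq_abs (Aq - A), sq_abs (A - 1), abs_nonneg (Aq - A), abs_nonneg (A - 1),
      mul_le_mul hA1 hAA (abs_nonneg _) (by linarith : (0:ℝ) ≤ M + 1),
      le_abs_self ((A - 1) * (Aq - A)), abs_mul (A - 1) (Aq - A),
      mul_le_mul hAA hAA (abs_nonneg _) he0]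
  calc (Aq - 1) ^ 2 / w ≤ ((A - 1) ^ 2 + (2 * M + 3) * e) / w := by gcongr
    _ = (A - 1) ^ 2 / w + (2 * M + 3) * e / w := add_div _ _ _
    _ ≤ (A - 1) ^ 2 / w + (2 * M + 3) * e / wl := by
        have : (2 * M + 3) * e / w ≤ (2 * M + 3) * e / wl :=
          div_le_div_of_nonneg_left (by positivity) hwl hwlw
        linarith

lemma weight_dyadic (n : ℕ) :
    (∫⁻ z in ball (0:ℂ) (1 - (2:ℝ)⁻¹ ^ n),
      ENNReal.ofReal (1 / (1 - ‖z‖ ^ 2)) ∂dA) ≤ 2 * n := by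
  induction n with
  | zero => simp
  | succ n ih =>
    set a : ℝ := 1 - (2:ℝ)⁻¹ ^ n with ha_def
    set b : ℝ := 1 - (2:ℝ)⁻¹ ^ (n+1) with hb_def
    have hpow : (0:ℝ) < (2:ℝ)⁻¹ ^ (n+1) := by positivity
    have hpow1 : (2:ℝ)⁻¹ ^ n ≤ 1 := pow_le_one₀ (by norm_num) (by norm_num)
    have hpow1' : (2:ℝ)⁻¹ ^ (n+1) ≤ 1 := pow_le_one₀ (by norm_num) (by norm_num)
    have hab : a ≤ b := by
      have : (2:ℝ)⁻¹ ^ (n+1) ≤ (2:ℝ)⁻¹ ^ n :=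
        pow_le_pow_of_le_one (by norm_num) (by norm_num) (Nat.le_succ n)
      simp only [ha_def, hb_def]; linarith
    have ha0 : 0 ≤ a := by simp only [ha_def]; linarith
    have hb0 : 0 ≤ b := ha0.trans hab
    have hsub : ball (0:ℂ) b ⊆ ball (0:ℂ) a ∪ (ball (0:ℂ) b \ ball (0:ℂ) a) := by
      intro z hz
      by_cases h : z ∈ ball (0:ℂ) a
      · exact Or.inl h
      · exact Or.inr ⟨hz, h⟩
    refine le_trans (lintegral_mono_set hsub) ?_
    refine le_trans (lintegral_union_le _ _ _) ?_
    have hbound : (∫⁻ z in ball (0:ℂ) b \ ball (0:ℂ) a,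
        ENNReal.ofReal (1 / (1 - ‖z‖ ^ 2)) ∂dA) ≤ 2 := by
      have hstep : (∫⁻ z in ball (0:ℂ) b \ ball (0:ℂ) a,
          ENNReal.ofReal (1 / (1 - ‖z‖ ^ 2)) ∂dA) ≤
          (∫⁻ _ in ball (0:ℂ) b \ ball (0:ℂ) a,
            ENNReal.ofReal ((2:ℝ) ^ (n+1)) ∂dA) := by
        refine setLIntegral_mono measurable_const ?_
        intro z hz
        apply ENNReal.ofReal_le_ofReal
        have hz1 : ‖z‖ < b := by
          simpa [Complex.dist_eq] using hz.1
        have hz2 : a ≤ ‖z‖ := by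
          have := hz.2
          simp only [mem_ball, Complex.dist_eq, sub_zero, not_lt] at this
          exact this
        have hzpos : 0 ≤ ‖z‖ := norm_nonneg z
        have hb1 : b ≤ 1 := by simp only [hb_def]; linarith
        have hzle : ‖z‖ ≤ 1 := le_trans hz1.le hb1
        have h5 : ‖z‖ ^ 2 ≤ ‖z‖ := by nlinarith
        have hw : (2:ℝ)⁻¹ ^ (n+1) ≤ 1 - ‖z‖ ^ 2 := by
          rw [hb_def] at hz1; linarith
        have hwpos : (0:ℝ) < 1 - ‖z‖ ^ 2 := lt_of_lt_of_le hpow hw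
        rw [div_le_iff₀ hwpos]
        calc (1:ℝ) = (2:ℝ) ^ (n+1) * (2:ℝ)⁻¹ ^ (n+1) := by
              rw [← mul_pow]; norm_num
          _ ≤ (2:ℝ) ^ (n+1) * (1 - ‖z‖ ^ 2) := by
              apply mul_le_mul_of_nonneg_left hw (by positivity)
      refine hstep.trans ?_
      rw [setLIntegral_const]
      have hmeas : dA (ball (0:ℂ) b \ ball (0:ℂ) a) =
          ENNReal.ofReal (b ^ 2) - ENNReal.ofReal (a ^ 2) := by
        rw [measure_diff (ball_subset_ball hab) measurableSet_ball.nullMeasurableSet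
          (by rw [dA_ball ha0]; exact ENNReal.ofReal_ne_top), dA_ball ha0, dA_ball hb0]
      rw [hmeas, ← ENNReal.ofReal_sub _ (by positivity), ← ENNReal.ofReal_mul (by positivity)]
      have : (2:ℝ) ^ (n+1) * (b ^ 2 - a ^ 2) ≤ 2 := by
        have h1 : b ^ 2 - a ^ 2 = (b - a) * (b + a) := by ring
        have h2 : b - a = (2:ℝ)⁻¹ ^ (n+1) := by
          simp only [ha_def, hb_def, pow_succ]; ring
        have h3 : (2:ℝ) ^ (n+1) * (2:ℝ)⁻¹ ^ (n+1) = 1 := by rw [← mul_pow]; norm_num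
        have h4 : b + a ≤ 2 := by simp only [ha_def, hb_def]; nlinarith
        calc (2:ℝ) ^ (n+1) * (b ^ 2 - a ^ 2) = ((2:ℝ) ^ (n+1) * (2:ℝ)⁻¹ ^ (n+1)) * (b + a) := by
              rw [h1, h2]; ring
          _ ≤ 2 := by rw [h3]; linarith
      calc ENNReal.ofReal ((2:ℝ) ^ (n+1) * (b ^ 2 - a ^ 2)) ≤ ENNReal.ofReal 2 :=
            ENNReal.ofReal_le_ofReal this
        _ = 2 := by norm_num
    calc (∫⁻ z in ball (0:ℂ) a, ENNReal.ofReal (1 / (1 - ‖z‖ ^ 2)) ∂dA) +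
          (∫⁻ z in ball (0:ℂ) b \ ball (0:ℂ) a,
            ENNReal.ofReal (1 / (1 - ‖z‖ ^ 2)) ∂dA)
        ≤ 2 * n + 2 := add_le_add ih hbound
      _ = 2 * (n + 1 : ℕ) := by push_cast; ring

lemma weight_le {r : ℝ} (hr : 15/16 ≤ r) (hr1 : r < 1) :
    (∫⁻ z in ball (0:ℂ) r, ENNReal.ofReal (1 / (1 - ‖z‖ ^ 2)) ∂dA) ≤ 7 * LL r := by
  rw [LL]
  set x : ℝ := 1 - r with hx_def
  have hx0 : 0 < x := by simp only [hx_def]; linarith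
  have hx16 : x ≤ 1/16 := by simp only [hx_def]; linarith
  have hinvx : (16:ℝ) ≤ 1/x := by
    rw [le_div_iff₀ hx0]; linarith
  set n : ℕ := ⌈Real.logb 2 (1/x)⌉₊ with hn_def
  have hlogb0 : 0 ≤ Real.logb 2 (1/x) :=
    Real.logb_nonneg (by norm_num) (by linarith)
  have hceil : Real.logb 2 (1/x) ≤ (n:ℝ) := Nat.le_ceil _
  have hceil' : (n:ℝ) ≤ Real.logb 2 (1/x) + 1 := (Nat.ceil_lt_add_one hlogb0).le
  have hpow : (2:ℝ)⁻¹ ^ n ≤ x := by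
    have h1 : 1/x ≤ (2:ℝ) ^ (n:ℝ) := by
      rw [← Real.rpow_logb (by norm_num : (0:ℝ) < 2) (by norm_num) (by positivity : (0:ℝ) < 1/x)]
      exact Real.rpow_le_rpow_left_iff (by norm_num : (1:ℝ) < 2) |>.mpr hceil
    rw [Real.rpow_natCast] at h1
    rw [inv_pow]
    rw [inv_le_comm₀ (by positivity) hx0]
    rw [← one_div]
    exact h1
  have hsub : ball (0:ℂ) r ⊆ ball (0:ℂ) (1 - (2:ℝ)⁻¹ ^ n) :=
    ball_subset_ball (by simp only [hx_def] at hpow ⊢; linarith)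
  refine le_trans (lintegral_mono_set hsub) (le_trans (weight_dyadic n) ?_)
  set X : ℝ := Real.log (1/x) with hX_def
  set Y : ℝ := Real.log (1 / (1 - r ^ 2)) with hY_def
  have hl2 : (1/2 : ℝ) ≤ Real.log 2 := by
    have := Real.log_two_gt_d9; linarith
  have hl2' : Real.log 2 ≤ 1 := by
    have := Real.log_two_lt_d9; linarith
  have hX4 : 4 * Real.log 2 ≤ X := by
    have h16 : Real.log 16 ≤ X := Real.log_le_log (by norm_num) hinvx
    have : Real.log 16 = 4 * Real.log 2 := by
      rw [show (16:ℝ) = 2^4 by norm_num, Real.log_pow]; push_cast; ring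
    linarith
  have hYX : X - Real.log 2 ≤ Y := by
    have hfact : 1 - r^2 = x * (1 + r) := by simp only [hx_def]; ring
    have h1r : (0:ℝ) < 1 + r := by linarith
    have hYeq : Y = -Real.log (1-r^2) := by
      rw [hY_def, one_div, Real.log_inv]
    have hXeq : X = -Real.log x := by rw [hX_def, one_div, Real.log_inv]
    have hlogmul : Real.log (1-r^2) = Real.log x + Real.log (1+r) := by
      rw [hfact, Real.log_mul (ne_of_gt hx0) (ne_of_gt h1r)]
    have hlog1r : Real.log (1+r) ≤ Real.log 2 :=
      Real.log_le_log h1r (by linarith)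
    rw [hYeq, hXeq, hlogmul]; linarith
  have hY0 : 0 ≤ Y := by linarith
  have hn2 : (n:ℝ) ≤ X / Real.log 2 + 1 := by
    rw [← Real.log_div_log] at hceil'; exact hceil'
  have hdiv : X / Real.log 2 ≤ 2 * X := by
    rw [div_le_iff₀ (by linarith)]
    nlinarith
  have hfinal : 2 * (n:ℝ) ≤ 7 * Y := by nlinarith
  calc (2 * (n:ℕ) : ℝ≥0∞) = ENNReal.ofReal ((2 * n : ℕ) : ℝ) := by
        rw [ENNReal.ofReal_natCast]; push_cast; ring
    _ ≤ ENNReal.ofReal (7 * Y) := by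
        apply ENNReal.ofReal_le_ofReal; push_cast; linarith
    _ = 7 * ENNReal.ofReal Y := by
        rw [ENNReal.ofReal_mul (by norm_num)]; norm_num

lemma inf_le_seven {r : ℝ} (hr : 15/16 ≤ r) (hr1 : r < 1) :
    (⨅ p : Polynomial ℂ, rhoH r fun z => p.eval z) ≤ 7 := by
  have hr0 : (0:ℝ) < r := by linarith
  have hL0 : LL r ≠ 0 := (LL_pos hr0 hr1).ne'
  have hLtop : LL r ≠ ⊤ := LL_ne_top r
  refine le_trans (iInf_le _ (0 : Polynomial ℂ)) ?_
  have heq : rhoH r (fun z => (0 : Polynomial ℂ).eval z) =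
      (LL r)⁻¹ * ∫⁻ z in ball (0:ℂ) r, ENNReal.ofReal (1 / (1 - ‖z‖ ^ 2)) ∂dA := by
    unfold rhoH
    congr 1
    apply lintegral_congr
    intro z
    congr 1
    simp
  rw [heq]
  calc (LL r)⁻¹ * ∫⁻ z in ball (0:ℂ) r, ENNReal.ofReal (1 / (1 - ‖z‖ ^ 2)) ∂dA
      ≤ (LL r)⁻¹ * (7 * LL r) := mul_le_mul_right (weight_le hr hr1) _
    _ = 7 := by
        rw [mul_comm (7:ℝ≥0∞), ← mul_assoc, ENNReal.inv_mul_cancel hL0 hLtop, one_mul]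


/-- Pointwise discrepancy comparison for uniformly close functions. -/
lemma pointwise_close {s M er c : ℝ} {z qz gz : ℂ} (h0 : 0 < s) (h1 : s < 1)
    (hM0 : 0 ≤ M) (her0 : 0 < er) (her1 : er ≤ 1)
    (hc : c = (2 * M + 3) * er / (1 - s ^ 2))
    (hzs : ‖z‖ < s) (hdist : ‖qz - gz‖ ≤ er)
    (hMz : ‖gz‖ ≤ M) :
    ENNReal.ofReal (((1 - ‖z‖ ^ 2) * ‖qz‖ - 1) ^ 2
        / (1 - ‖z‖ ^ 2)) ≤
      ENNReal.ofReal (((1 - ‖z‖ ^ 2) * ‖gz‖ - 1) ^ 2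
        / (1 - ‖z‖ ^ 2)) + ENNReal.ofReal c := by
  have hw0 : (0:ℝ) < 1 - s ^ 2 := by nlinarith
  have hz0 : 0 ≤ ‖z‖ := norm_nonneg z
  have hww : 1 - s ^ 2 ≤ 1 - ‖z‖ ^ 2 := by nlinarith
  have hw1 : 1 - ‖z‖ ^ 2 ≤ 1 := by nlinarith
  have hwpos : (0:ℝ) < 1 - ‖z‖ ^ 2 := lt_of_lt_of_le hw0 hww
  have hc0 : 0 ≤ c := by rw [hc]; positivity
  have hAA : |(1 - ‖z‖ ^ 2) * ‖qz‖
      - (1 - ‖z‖ ^ 2) * ‖gz‖| ≤ er := by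
    rw [← mul_sub, abs_mul, abs_of_pos hwpos]
    have habs : |‖qz‖ - ‖gz‖| ≤ er :=
      le_trans (abs_norm_sub_norm_le _ _) hdist
    calc (1 - ‖z‖ ^ 2) * |‖qz‖ - ‖gz‖|
        ≤ 1 * er := mul_le_mul hw1 habs (abs_nonneg _) zero_le_one
      _ = er := one_mul _
  have hA1 : |(1 - ‖z‖ ^ 2) * ‖gz‖ - 1| ≤ M + 1 := by
    rw [abs_le]
    have hAnn : 0 ≤ (1 - ‖z‖ ^ 2) * ‖gz‖ := by positivity
    have hAM : (1 - ‖z‖ ^ 2) * ‖gz‖ ≤ M := by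
      calc (1 - ‖z‖ ^ 2) * ‖gz‖ ≤ 1 * M :=
            mul_le_mul hw1 hMz (norm_nonneg _) zero_le_one
        _ = M := one_mul M
    constructor <;> linarith
  rw [← ENNReal.ofReal_add (by positivity) hc0]
  apply ENNReal.ofReal_le_ofReal
  rw [hc]
  exact key_real hw0 hww hw1 her0.le her1 hM0 hAA hA1

set_option maxHeartbeats 1000000 in
lemma density {g : ℂ → ℂ} {s : ℝ} (hg : DifferentiableOn ℂ g (ball 0 1))
    (h0 : 0 < s) (h1 : s < 1) :
    (⨅ p : Polynomial ℂ, rhoH s fun z => p.eval z) ≤ rhoH s g := by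
  apply ENNReal.le_of_forall_pos_le_add
  intro ε hε _
  have hεc : (0:ℝ) < (ε:ℝ) := hε
  have hw0 : (0:ℝ) < 1 - s^2 := by nlinarith
  set ls : ℝ := Real.log (1 / (1 - s ^ 2)) with hls_def
  have hls0 : 0 < ls := by
    rw [hls_def]; apply Real.log_pos; rw [lt_div_iff₀ hw0]; nlinarith
  -- bound for g on closed ball s
  obtain ⟨M, hM⟩ := (isCompact_closedBall (0:ℂ) s).exists_bound_of_continuousOn
    (hg.continuousOn.mono (closedBall_subset_ball h1))
  have hM0 : 0 ≤ M := le_trans (norm_nonneg _) (hM 0 (by simp [h0.le]))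
  set εr : ℝ := min 1 ((ε:ℝ) * ls * (1 - s^2) / (2*M+3)) with hεr_def
  have hεr0 : 0 < εr := lt_min one_pos (by positivity)
  have hεr1 : εr ≤ 1 := min_le_left _ _
  set c : ℝ := (2*M+3) * εr / (1 - s^2) with hc_def
  -- power series setup
  set u : ℝ := (s+1)/2 with hu_def
  set v : ℝ := (s+3)/4 with hv_def
  have hsu : s < u := by rw [hu_def]; linarith
  have huv : u < v := by rw [hu_def, hv_def]; linarith
  have hv1 : v < 1 := by rw [hv_def]; linarith
  have hu0 : 0 < u := by rw [hu_def]; linarith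
  have hv0 : 0 < v := by rw [hv_def]; linarith
  have hgv : DifferentiableOn ℂ g (closedBall (0:ℂ) (v.toNNReal : ℝ)) := by
    apply hg.mono
    rw [Real.coe_toNNReal v hv0.le]
    intro z hz
    simp only [mem_closedBall, mem_ball] at hz ⊢
    linarith
  have hps : HasFPowerSeriesOnBall g (cauchyPowerSeries g 0 v.toNNReal) 0 v.toNNReal :=
    hgv.hasFPowerSeriesOnBall (by simpa using hv0)
  set P := cauchyPowerSeries g 0 v.toNNReal with hP_def
  have htu : TendstoUniformlyOn (fun n y => P.partialSum n y) (fun y => g (0 + y)) atTop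
      (ball (0:ℂ) (u.toNNReal : ℝ)) := by
    have := hps.tendstoUniformlyOn (r' := u.toNNReal)
      (by rw [ENNReal.coe_lt_coe]
          exact Real.toNNReal_lt_toNNReal_iff'.mpr ⟨huv, hv0⟩)
    simpa using this
  rw [Metric.tendstoUniformlyOn_iff] at htu
  obtain ⟨n, hn⟩ := (htu εr hεr0).exists
  clear htu
  set q : Polynomial ℂ := ∑ i ∈ Finset.range n, Polynomial.C (P.coeff i) * Polynomial.X ^ i
    with hq_def
  have heval : ∀ y : ℂ, q.eval y = P.partialSum n y := by
    intro y
    rw [hq_def, FormalMultilinearSeries.partialSum, Polynomial.eval_finset_sum]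
    apply Finset.sum_congr rfl
    intro i _
    rw [FormalMultilinearSeries.apply_eq_pow_smul_coeff, smul_eq_mul]
    simp only [Polynomial.eval_mul, Polynomial.eval_pow, Polynomial.eval_C, Polynomial.eval_X]
    ring
  have hpt : ∀ z ∈ ball (0:ℂ) s,
      ENNReal.ofReal (((1 - ‖z‖ ^ 2) * ‖q.eval z‖ - 1) ^ 2
        / (1 - ‖z‖ ^ 2)) ≤
      ENNReal.ofReal (((1 - ‖z‖ ^ 2) * ‖g z‖ - 1) ^ 2
        / (1 - ‖z‖ ^ 2)) + ENNReal.ofReal c := by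
    intro z hz
    have hzs : ‖z‖ < s := by simpa [Complex.dist_eq] using hz
    have hdist : ‖q.eval z - g z‖ ≤ εr := by
      have hzu : z ∈ ball (0:ℂ) (u.toNNReal : ℝ) := by
        simp only [mem_ball, Complex.dist_eq, sub_zero]
        rw [Real.coe_toNNReal u hu0.le]
        linarith
      have h2 := hn z hzu
      rw [dist_comm, Complex.dist_eq, zero_add, ← heval z] at h2
      exact h2.le
    have hMz : ‖g z‖ ≤ M := by
      have := hM z (mem_closedBall.mpr (mem_ball.mp hz).le)
      simpa using this
    exact pointwise_close h0 h1 hM0 hεr0 hεr1 hc_def hzs hdist hMz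
  have hc0 : 0 ≤ c := by rw [hc_def]; positivity
  have hDq : Dint (fun z => q.eval z) (ball 0 s) ≤ Dint g (ball 0 s) + ENNReal.ofReal c := by
    rw [Dint, Dint]
    calc (∫⁻ z in ball (0:ℂ) s,
          ENNReal.ofReal (((1 - ‖z‖ ^ 2) * ‖q.eval z‖ - 1) ^ 2
            / (1 - ‖z‖ ^ 2)) ∂dA)
        ≤ ∫⁻ z in ball (0:ℂ) s,
            (ENNReal.ofReal (((1 - ‖z‖ ^ 2) * ‖g z‖ - 1) ^ 2
              / (1 - ‖z‖ ^ 2)) + ENNReal.ofReal c) ∂dA :=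
          setLIntegral_mono' measurableSet_ball hpt
      _ = (∫⁻ z in ball (0:ℂ) s,
            ENNReal.ofReal (((1 - ‖z‖ ^ 2) * ‖g z‖ - 1) ^ 2
              / (1 - ‖z‖ ^ 2)) ∂dA) + ENNReal.ofReal c * dA (ball (0:ℂ) s) := by
          rw [lintegral_add_right _ measurable_const, setLIntegral_const]
      _ ≤ (∫⁻ z in ball (0:ℂ) s,
            ENNReal.ofReal (((1 - ‖z‖ ^ 2) * ‖g z‖ - 1) ^ 2
              / (1 - ‖z‖ ^ 2)) ∂dA) + ENNReal.ofReal c := by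
          apply add_le_add_right
          calc ENNReal.ofReal c * dA (ball (0:ℂ) s) ≤ ENNReal.ofReal c * 1 := by
                apply mul_le_mul_right
                rw [dA_ball h0.le]
                exact ENNReal.ofReal_le_one.mpr (pow_le_one₀ h0.le h1.le)
            _ = ENNReal.ofReal c := mul_one _
  have hL0 : LL s ≠ 0 := (LL_pos h0 h1).ne'
  have hLtop : LL s ≠ ⊤ := LL_ne_top s
  have hcL : (LL s)⁻¹ * ENNReal.ofReal c ≤ (ε : ℝ≥0∞) := by
    have hcls : c ≤ (ε:ℝ) * ls := by
      rw [hc_def, div_le_iff₀ hw0]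
      have h := min_le_right (1:ℝ) ((ε:ℝ) * ls * (1 - s^2) / (2*M+3))
      rw [← hεr_def, le_div_iff₀ (by linarith : (0:ℝ) < 2*M+3)] at h
      linarith
    have hLLs : LL s = ENNReal.ofReal ls := by rw [hls_def]; rfl
    have hle : ENNReal.ofReal c ≤ (ε : ℝ≥0∞) * LL s := by
      calc ENNReal.ofReal c ≤ ENNReal.ofReal ((ε:ℝ) * ls) := ENNReal.ofReal_le_ofReal hcls
        _ = (ε : ℝ≥0∞) * LL s := by
            rw [ENNReal.ofReal_mul ε.coe_nonneg, ENNReal.ofReal_coe_nnreal, hLLs]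
    calc (LL s)⁻¹ * ENNReal.ofReal c ≤ (LL s)⁻¹ * ((ε : ℝ≥0∞) * LL s) :=
          mul_le_mul_right hle _
      _ = (ε : ℝ≥0∞) * ((LL s)⁻¹ * LL s) := by ring
      _ = (ε : ℝ≥0∞) := by rw [ENNReal.inv_mul_cancel hL0 hLtop, mul_one]
  refine le_trans (iInf_le _ q) ?_
  rw [rhoH_eq, rhoH_eq]
  calc (LL s)⁻¹ * Dint (fun z => q.eval z) (ball 0 s)
      ≤ (LL s)⁻¹ * (Dint g (ball 0 s) + ENNReal.ofReal c) := mul_le_mul_right hDq _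
    _ = (LL s)⁻¹ * Dint g (ball 0 s) + (LL s)⁻¹ * ENNReal.ofReal c := mul_add _ _ _
    _ ≤ (LL s)⁻¹ * Dint g (ball 0 s) + (ε : ℝ≥0∞) := add_le_add_right hcL _

end Helpers
noncomputable section Helpers2

lemma Dint_split (F : ℂ → ℂ) {R S : ℝ} (hSR : S ≤ R) :
    Dint F (ball 0 S) + Dint F (ann S R) ≤ Dint F (ball 0 R) := by
  have hdisj : Disjoint (ball (0:ℂ) S) (ann S R) :=
    Disjoint.mono_left ball_subset_closedBall disjoint_sdiff_right
  have hunion : ball (0:ℂ) S ∪ ann S R ⊆ ball (0:ℂ) R := by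
    apply union_subset (ball_subset_ball hSR)
    exact diff_subset
  have hmeas : MeasurableSet (ann S R) :=
    measurableSet_ball.diff measurableSet_closedBall
  rw [Dint, Dint, Dint, ← lintegral_union hmeas hdisj]
  exact lintegral_mono_set hunion

lemma ann_real_ineq {a w wl : ℝ} (hwl : 0 < wl) (hwlw : wl ≤ w) (ha : 0 ≤ a) :
    a ^ 2 * w ≤ 2 * ((w * a - 1) ^ 2 / w) + 2 / wl := by
  have hw : 0 < w := lt_of_lt_of_le hwl hwlw
  have key : a ^ 2 * w * w ≤ 2 * (w * a - 1) ^ 2 + 2 := by nlinarith [sq_nonneg (w * a - 2)]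
  calc a ^ 2 * w = (a ^ 2 * w * w) / w := by field_simp
    _ ≤ (2 * (w * a - 1) ^ 2 + 2) / w := by gcongr
    _ = 2 * ((w * a - 1) ^ 2 / w) + 2 / w := by ring
    _ ≤ 2 * ((w * a - 1) ^ 2 / w) + 2 / wl := by gcongr

lemma ann_pointwise {a w wl : ℝ} (hwl : 0 < wl) (hwlw : wl ≤ w) (ha : 0 ≤ a) :
    ENNReal.ofReal (a ^ 2 * w) ≤
      2 * ENNReal.ofReal ((w * a - 1) ^ 2 / w) + ENNReal.ofReal (2 / wl) := by
  have hw : 0 < w := lt_of_lt_of_le hwl hwlw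
  calc ENNReal.ofReal (a ^ 2 * w)
      ≤ ENNReal.ofReal (2 * ((w * a - 1) ^ 2 / w) + 2 / wl) :=
        ENNReal.ofReal_le_ofReal (ann_real_ineq hwl hwlw ha)
    _ = ENNReal.ofReal (2 * ((w * a - 1) ^ 2 / w)) + ENNReal.ofReal (2 / wl) :=
        ENNReal.ofReal_add (by positivity) (by positivity)
    _ = 2 * ENNReal.ofReal ((w * a - 1) ^ 2 / w) + ENNReal.ofReal (2 / wl) := by
        rw [ENNReal.ofReal_mul (by norm_num)]; norm_num

lemma ann_integral_bound (F : ℂ → ℂ) {R S : ℝ} (h0 : 0 < R) (h1 : R < 1) (hS : S = R * R) :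
    (∫⁻ z in ann S R, ENNReal.ofReal (‖F z‖ ^ 2 * (1 - ‖z‖ ^ 2)) ∂dA)
      ≤ 2 * Dint F (ann S R) + 2 := by
  have hw0 : (0:ℝ) < 1 - R ^ 2 := by nlinarith
  have hS0 : 0 ≤ S := by rw [hS]; positivity
  have hpt : ∀ z ∈ ann S R,
      ENNReal.ofReal (‖F z‖ ^ 2 * (1 - ‖z‖ ^ 2)) ≤
        2 * ENNReal.ofReal (((1 - ‖z‖ ^ 2) * ‖F z‖ - 1) ^ 2
          / (1 - ‖z‖ ^ 2)) + ENNReal.ofReal (2 / (1 - R ^ 2)) := by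
    intro z hz
    have hzR : ‖z‖ < R := by
      have := hz.1; simpa [Complex.dist_eq] using this
    have hz0 : 0 ≤ ‖z‖ := norm_nonneg z
    have hww : 1 - R ^ 2 ≤ 1 - ‖z‖ ^ 2 := by nlinarith
    exact ann_pointwise (a := ‖F z‖) hw0 hww (norm_nonneg _)
  calc (∫⁻ z in ann S R, ENNReal.ofReal (‖F z‖ ^ 2 * (1 - ‖z‖ ^ 2)) ∂dA)
      ≤ ∫⁻ z in ann S R,
          (2 * ENNReal.ofReal (((1 - ‖z‖ ^ 2) * ‖F z‖ - 1) ^ 2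
            / (1 - ‖z‖ ^ 2)) + ENNReal.ofReal (2 / (1 - R ^ 2))) ∂dA :=
        setLIntegral_mono' (measurableSet_ball.diff measurableSet_closedBall) hpt
    _ = (∫⁻ z in ann S R,
          2 * ENNReal.ofReal (((1 - ‖z‖ ^ 2) * ‖F z‖ - 1) ^ 2
            / (1 - ‖z‖ ^ 2)) ∂dA) + ENNReal.ofReal (2 / (1 - R ^ 2)) * dA (ann S R) := by
        rw [lintegral_add_right _ measurable_const, setLIntegral_const]
    _ ≤ 2 * Dint F (ann S R) + 2 := by
        apply add_le_add
        · rw [Dint, lintegral_const_mul' 2 _ (by norm_num)]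
        · have hann : dA (ann S R) ≤ ENNReal.ofReal (R ^ 2 - S ^ 2) := by
            have hsub : ann S R ⊆ ball (0:ℂ) R \ ball (0:ℂ) S :=
              diff_subset_diff_right ball_subset_closedBall
            refine le_trans (measure_mono hsub) ?_
            rw [measure_diff (ball_subset_ball (by nlinarith : S ≤ R))
              measurableSet_ball.nullMeasurableSet
              (by rw [dA_ball hS0]; exact ENNReal.ofReal_ne_top),
              dA_ball hS0, dA_ball h0.le, ← ENNReal.ofReal_sub _ (by positivity)]
          calc ENNReal.ofReal (2 / (1 - R ^ 2)) * dA (ann S R)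
              ≤ ENNReal.ofReal (2 / (1 - R ^ 2)) * ENNReal.ofReal (R ^ 2 - S ^ 2) :=
                mul_le_mul_right hann _
            _ = ENNReal.ofReal (2 / (1 - R ^ 2) * (R ^ 2 - S ^ 2)) :=
                (ENNReal.ofReal_mul (by positivity)).symm
            _ ≤ 2 := by
                have heq : 2 / (1 - R ^ 2) * (R ^ 2 - S ^ 2) = 2 * R ^ 2 := by
                  rw [hS]; field_simp
                rw [heq]
                calc ENNReal.ofReal (2 * R ^ 2) ≤ ENNReal.ofReal 2 :=
                      ENNReal.ofReal_le_ofReal (by nlinarith)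
                  _ = 2 := by norm_num

lemma LL_sub_log2 {R S : ℝ} (h0 : 0 < R) (h1 : R < 1) (hS : S = R * R) :
    LL R - ENNReal.ofReal (Real.log 2) ≤ LL S := by
  rw [LL, LL, ← ENNReal.ofReal_sub _ (Real.log_nonneg (by norm_num))]
  apply ENNReal.ofReal_le_ofReal
  have hw0 : (0:ℝ) < 1 - R ^ 2 := by nlinarith
  have hwS : (0:ℝ) < 1 - S ^ 2 := by rw [hS]; nlinarith
  have h1R2 : (0:ℝ) < 1 + R ^ 2 := by positivity
  have hfact : 1 - S ^ 2 = (1 - R ^ 2) * (1 + R ^ 2) := by rw [hS]; ring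
  rw [one_div, one_div, Real.log_inv, Real.log_inv, hfact,
    Real.log_mul (ne_of_gt hw0) (ne_of_gt h1R2)]
  have : Real.log (1 + R ^ 2) ≤ Real.log 2 := Real.log_le_log h1R2 (by nlinarith)
  linarith

lemma ennreal_chain {L L' Da ρ η c2 : ℝ≥0∞}
    (hL : L ≠ ⊤) (hL'' : L' ≠ ⊤) (hρ : ρ ≤ 7) (hc2 : c2 ≤ 1) (hL' : L - c2 ≤ L')
    (hmain : L' * (ρ - η) + Da ≤ L * (ρ + η)) :
    Da ≤ 2 * (L * η) + 7 := by
  have hρt : ρ ≠ ⊤ := ne_top_of_le_ne_top (by norm_num) hρ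
  have hρη : ρ - η ≠ ⊤ := ne_top_of_le_ne_top hρt tsub_le_self
  have haux : ∀ a b c : ℝ≥0∞, a - (b - c) ≤ (a - b) + c := by
    intro a b c
    rw [tsub_le_iff_right]
    calc a ≤ a - b + b := le_tsub_add
      _ ≤ a - b + (c + (b - c)) := add_le_add_right le_add_tsub _
      _ = a - b + c + (b - c) := by ring
  have hsub6 : ∀ x y : ℝ≥0∞, x ≠ ⊤ → (x + y) - (x - y) ≤ 2 * y := by
    intro x y hx
    rw [two_mul, tsub_le_iff_right]
    calc x + y ≤ (y + (x - y)) + y := add_le_add_left le_add_tsub y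
      _ = y + y + (x - y) := by ring
  have h1 : Da ≤ L * (ρ + η) - L' * (ρ - η) := ENNReal.le_sub_of_add_le_left (ENNReal.mul_ne_top hL'' (ne_top_of_le_ne_top (by norm_num : (7:ℝ≥0∞) ≠ ⊤) (le_trans tsub_le_self hρ))) hmain
  have h2 : L * (ρ - η) - c2 * (ρ - η) ≤ L' * (ρ - η) := by
    rw [← ENNReal.sub_mul (fun _ _ => hρη)]
    exact mul_le_mul_left hL' _
  have h3 : Da ≤ L * (ρ + η) - (L * (ρ - η) - c2 * (ρ - η)) :=
    le_trans h1 (tsub_le_tsub_left h2 _)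
  have h4 : L * (ρ + η) - (L * (ρ - η) - c2 * (ρ - η)) ≤
      (L * (ρ + η) - L * (ρ - η)) + c2 * (ρ - η) := haux _ _ _
  have h5 : L * (ρ + η) - L * (ρ - η) ≤ 2 * (L * η) := by
    rw [mul_add, ENNReal.mul_sub (fun _ _ => hL)]
    exact hsub6 (L * ρ) (L * η) (ENNReal.mul_ne_top hL hρt)
  have h6 : c2 * (ρ - η) ≤ 7 := by
    calc c2 * (ρ - η) ≤ 1 * ρ := mul_le_mul' hc2 (le_trans tsub_le_self le_rfl)
      _ = ρ := one_mul _
      _ ≤ 7 := hρ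
  calc Da ≤ (L * (ρ + η) - L * (ρ - η)) + c2 * (ρ - η) := le_trans h3 h4
    _ ≤ 2 * (L * η) + 7 := add_le_add h5 h6

lemma final_chain {L T Da η : ℝ≥0∞} (hL0 : L ≠ 0) (hLt : L ≠ ⊤)
    (hT : T ≤ 2 * Da + 2) (hDa : Da ≤ 2 * (L * η) + 7) (hLinv : L⁻¹ ≤ η) :
    L⁻¹ * T ≤ 30 * η := by
  have h1 : T ≤ L * (4 * η) + 16 := by
    calc T ≤ 2 * (2 * (L * η) + 7) + 2 := by
          exact le_trans hT (add_le_add_left (mul_le_mul_right hDa 2) 2)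
      _ = L * (4 * η) + 16 := by ring
  calc L⁻¹ * T ≤ L⁻¹ * (L * (4 * η) + 16) := mul_le_mul_right h1 _
    _ = (L⁻¹ * L) * (4 * η) + 16 * L⁻¹ := by ring
    _ = 4 * η + 16 * L⁻¹ := by rw [ENNReal.inv_mul_cancel hL0 hLt, one_mul]
    _ ≤ 4 * η + 16 * η := add_le_add_right (mul_le_mul_right hLinv 16) _
    _ = 20 * η := by ring
    _ ≤ 30 * η := mul_le_mul_left (by norm_num) _

end Helpers2
/-- hyperbolic L²-non-concentration. Let `r_k ∈ (0,1)` tend to 1 with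
`inf_f ρ_{H,r_k}(f) → ρ_H`, set `δ_k = 1 - r_k`, and let `f_k` minimize `ρ_{H,r_k}`.
Then `(1/log(1/(1-r_k²))) ∫_{𝔸(r_k(1-δ_k),r_k)} |f_k|² (1-|z|²) dA → 0`. -/
theorem hyperbolic_L2_nonconcentration (r : ℕ → ℝ) (hr : ∀ k, r k ∈ Ioo (0:ℝ) 1)
    (hr1 : Tendsto r atTop (𝓝 1))
    (hinf : Tendsto (fun k => ⨅ p : Polynomial ℂ, rhoH (r k) fun z => p.eval z)
      atTop (𝓝 rhoHd))
    (δ : ℕ → ℝ) (hδ : ∀ k, δ k = 1 - r k)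
    (f : ℕ → ℂ → ℂ) (hf : ∀ k, IsMinH (r k) (f k)) :
    Tendsto (fun k => (ENNReal.ofReal (Real.log (1 / (1 - (r k) ^ 2))))⁻¹ *
        ∫⁻ z in ann (r k * (1 - δ k)) (r k), ENNReal.ofReal
          (‖f k z‖ ^ 2 * (1 - ‖z‖ ^ 2)) ∂dA)
      atTop (𝓝 0) := by
  have hsq_eq : ∀ k, r k * (1 - δ k) = r k * r k := by
    intro k; rw [hδ k]; ring
  have hsq01 : ∀ k, r k * (1 - δ k) ∈ Ioo (0:ℝ) 1 := by
    intro k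
    have h := hr k
    rw [hsq_eq k]
    exact ⟨by nlinarith [h.1], by nlinarith [h.1, h.2]⟩
  have hsqle : ∀ k, r k * (1 - δ k) ≤ r k := by
    intro k; have h := hr k; rw [hsq_eq k]; nlinarith [h.1, h.2]
  have E1 : ∀ᶠ k in atTop, (15:ℝ)/16 ≤ r k :=
    hr1.eventually (eventually_ge_nhds (by norm_num))
  have hρ7 : rhoHd ≤ 7 :=
    le_of_tendsto hinf (E1.mono fun k hk => inf_le_seven hk (hr k).2)
  have hρt : rhoHd ≠ ⊤ := ne_top_of_le_ne_top (by norm_num) hρ7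
  have hbase : Tendsto (fun k => 1 - r k ^ 2) atTop (𝓝 0) := by
    have h2 : Tendsto (fun k => 1 - r k ^ 2) atTop (𝓝 (1 - 1 ^ 2)) :=
      tendsto_const_nhds.sub (hr1.pow 2)
    simpa using h2
  have hwithin : Tendsto (fun k => 1 - r k ^ 2) atTop (𝓝[>] 0) := by
    apply tendsto_nhdsWithin_of_tendsto_nhds_of_eventually_within _ hbase
    apply Eventually.of_forall
    intro k
    have h := hr k
    exact mem_Ioi.mpr (by nlinarith [h.1, h.2])
  have hlog : Tendsto (fun x : ℝ => Real.log (1 / x)) (𝓝[>] 0) atTop := by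
    have h2 : Tendsto (fun x : ℝ => -Real.log x) (𝓝[>] 0) atTop :=
      tendsto_neg_atBot_atTop.comp Real.tendsto_log_nhdsGT_zero
    apply h2.congr
    intro x
    rw [one_div, Real.log_inv]
  have hLtop : Tendsto (fun k => LL (r k)) atTop (𝓝 ⊤) :=
    ENNReal.tendsto_ofReal_atTop.comp (hlog.comp hwithin)
  have hLinv : Tendsto (fun k => (LL (r k))⁻¹) atTop (𝓝 0) := by
    have h2 := ENNReal.tendsto_inv_iff.mpr hLtop
    simpa using h2
  have hsqt : Tendsto (fun k => r k * (1 - δ k)) atTop (𝓝[<] 1) := by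
    apply tendsto_nhdsWithin_of_tendsto_nhds_of_eventually_within
    · have h2 : Tendsto (fun k => r k * r k) atTop (𝓝 1) := by
        simpa using hr1.mul hr1
      exact h2.congr fun k => (hsq_eq k).symm
    · exact Eventually.of_forall fun k => mem_Iio.mpr (hsq01 k).2
  have hliminf : rhoHd ≤ liminf
      (fun k => ⨅ p : Polynomial ℂ, rhoH (r k * (1 - δ k)) fun z => p.eval z) atTop :=
    liminf_le_liminf_of_le hsqt
  rw [ENNReal.tendsto_nhds_zero]
  intro ε hε
  rcases eq_or_ne ε ⊤ with rfl | hεt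
  · exact Eventually.of_forall fun _ => le_top
  set η : ℝ≥0∞ := ε / 30 with hη_def
  have hη0 : 0 < η := ENNReal.div_pos hε.ne' (by norm_num)
  have hηt : η ≠ ⊤ := (ENNReal.div_lt_top hεt (by norm_num)).ne
  have E2 : ∀ᶠ k in atTop,
      (⨅ p : Polynomial ℂ, rhoH (r k) fun z => p.eval z) ≤ rhoHd + η := by
    have hmem : Iio (rhoHd + η) ∈ 𝓝 rhoHd := Iio_mem_nhds (ENNReal.lt_add_right hρt hη0.ne')
    exact (hinf.eventually hmem).mono fun k hk => hk.le
  have E3 : ∀ᶠ k in atTop, rhoHd - η ≤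
      ⨅ p : Polynomial ℂ, rhoH (r k * (1 - δ k)) fun z => p.eval z := by
    by_cases hle : rhoHd ≤ η
    · refine Eventually.of_forall fun k => ?_
      rw [tsub_eq_zero_of_le hle]; exact zero_le
    · have hρ0 : rhoHd ≠ 0 := fun h => hle (h ▸ (zero_le : (0:ℝ≥0∞) ≤ η))
      have hlt : rhoHd - η < rhoHd := ENNReal.sub_lt_self hρt hρ0 hη0.ne'
      exact (eventually_lt_of_lt_liminf (lt_of_lt_of_le hlt hliminf)).mono fun k hk => hk.le
  have E4 : ∀ᶠ k in atTop, (LL (r k))⁻¹ ≤ η :=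
    (hLinv.eventually (Iio_mem_nhds hη0)).mono fun k hk => hk.le
  filter_upwards [E1, E2, E3, E4] with k h1 h2 h3 h4
  have hRk := hr k
  have hS01 := hsq01 k
  have hL0 : LL (r k) ≠ 0 := (LL_pos hRk.1 hRk.2).ne'
  have hLt : LL (r k) ≠ ⊤ := LL_ne_top _
  have hLS0 : LL (r k * (1 - δ k)) ≠ 0 := (LL_pos hS01.1 hS01.2).ne'
  have hLSt : LL (r k * (1 - δ k)) ≠ ⊤ := LL_ne_top _
  have hDr : Dint (f k) (ball 0 (r k)) ≤ LL (r k) * (rhoHd + η) := by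
    have h5 : rhoH (r k) (f k) ≤ ⨅ p : Polynomial ℂ, rhoH (r k) fun z => p.eval z :=
      le_iInf fun p => (hf k).2 _ (p.differentiable.differentiableOn)
    calc Dint (f k) (ball 0 (r k)) = LL (r k) * rhoH (r k) (f k) := by
          rw [rhoH_eq, ← mul_assoc, ENNReal.mul_inv_cancel hL0 hLt, one_mul]
      _ ≤ LL (r k) * (rhoHd + η) := mul_le_mul_right (h5.trans h2) _
  have hDs : LL (r k * (1 - δ k)) * (rhoHd - η) ≤
      Dint (f k) (ball 0 (r k * (1 - δ k))) := by
    have h6 : rhoHd - η ≤ rhoH (r k * (1 - δ k)) (f k) :=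
      h3.trans (density (hf k).1 hS01.1 hS01.2)
    calc LL (r k * (1 - δ k)) * (rhoHd - η)
        ≤ LL (r k * (1 - δ k)) * rhoH (r k * (1 - δ k)) (f k) := mul_le_mul_right h6 _
      _ = Dint (f k) (ball 0 (r k * (1 - δ k))) := by
          rw [rhoH_eq, ← mul_assoc, ENNReal.mul_inv_cancel hLS0 hLSt, one_mul]
  have hmain : LL (r k * (1 - δ k)) * (rhoHd - η) +
      Dint (f k) (ann (r k * (1 - δ k)) (r k)) ≤ LL (r k) * (rhoHd + η) :=
    le_trans (add_le_add_left hDs _) (le_trans (Dint_split (f k) (hsqle k)) hDr)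
  have hd : LL (r k) - ENNReal.ofReal (Real.log 2) ≤ LL (r k * (1 - δ k)) :=
    LL_sub_log2 hRk.1 hRk.2 (hsq_eq k)
  have hc2 : ENNReal.ofReal (Real.log 2) ≤ 1 :=
    ENNReal.ofReal_le_one.mpr (by have := Real.log_two_lt_d9; linarith)
  have hDa := ennreal_chain hLt hLSt hρ7 hc2 hd hmain
  have hT := ann_integral_bound (f k) hRk.1 hRk.2 (hsq_eq k)
  have hfin := final_chain hL0 hLt hT hDa h4
  have h30 : (30:ℝ≥0∞) * η = ε := ENNReal.mul_div_cancel' (by norm_num) (by norm_num)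
  exact le_trans hfin (le_of_eq h30)
end
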